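/- Let K₁,…,K_N : X × X → ℝ be kernels and let 𝒦 be the set of all functions of the form ∑ᵢ wᵢKᵢ where ∑ᵢ wᵢ = 1 and at most k of the weights wᵢ are nonzero. Then the pseudodimension of 𝒦 is at most 2k·log₂(k) + 2k·log₂(4eN). -/

import Mathlib

open Finset


lemma no_shatter_linalg {α : Type*} (d : ℕ) (f : Fin d → α → ℝ) (τ : α → ℝ)
    (s : Finset α) (hcard : s.card = d + 1)
    (h : ∀ C ⊆ s, ∃ w : Fin d → ℝ, ∀ p ∈ s, (p ∈ C ↔ τ p < ∑ j, w j * f j p)) : False := by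
  classical
  -- enumerate s
  let e : Fin (d+1) ≃ {x // x ∈ s} := ((s.equivFin).trans (finCongr hcard)).symm
  let g : Fin (d+1) → α := fun i => (e i : α)
  have hginj : Function.Injective g := fun i j hij => by
    apply e.injective; exact Subtype.ext hij
  have hgs : ∀ i, g i ∈ s := fun i => (e i).2
  -- a nonzero vector in the kernel of the evaluation map
  let L : (Fin (d+1) → ℝ) →ₗ[ℝ] (Fin d → ℝ) := (Matrix.of fun j i => f j (g i)).mulVecLin
  have hker : ∃ u : Fin (d+1) → ℝ, L u = 0 ∧ u ≠ 0 := by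
    by_contra hc
    push_neg at hc
    have hinj : Function.Injective L := by
      rw [← LinearMap.ker_eq_bot]
      rw [Submodule.eq_bot_iff]
      intro u hu
      exact hc u hu
    have := LinearMap.finrank_le_finrank_of_injective hinj
    simp only [Module.finrank_fin_fun] at this
    omega
  obtain ⟨u, hLu, hu0⟩ := hker
  -- WLOG some coordinate is positive
  obtain ⟨i₀, hi₀⟩ : ∃ i, u i ≠ 0 := Function.ne_iff.mp hu0
  have main : ∀ v : Fin (d+1) → ℝ, (∀ j, ∑ i, v i * f j (g i) = 0) → (∃ i, 0 < v i) → False := by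
    intro v hv hpos
    -- key identity
    have key : ∀ w : Fin d → ℝ, ∑ i, v i * (∑ j, w j * f j (g i)) = 0 := by
      intro w
      have : ∑ i, v i * (∑ j, w j * f j (g i)) = ∑ j, w j * (∑ i, v i * f j (g i)) := by
        simp_rw [Finset.mul_sum]
        rw [Finset.sum_comm]
        congr 1; ext j; congr 1; ext i; ring
      rw [this]
      simp [hv]
    -- positive pattern
    set C : Finset α := (Finset.univ.filter (fun i => 0 < v i)).image g with hC
    have hCs : C ⊆ s := by
      intro p hp
      simp only [hC, Finset.mem_image] at hp
      obtain ⟨i, _, rfl⟩ := hp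
      exact hgs i
    have hmemC : ∀ i, g i ∈ C ↔ 0 < v i := by
      intro i
      simp only [hC, Finset.mem_image, Finset.mem_filter, Finset.mem_univ, true_and]
      constructor
      · rintro ⟨i', hi', he⟩; rwa [← hginj he]
      · intro hi; exact ⟨i, hi, rfl⟩
    obtain ⟨w, hw⟩ := h C hCs
    have hterm : ∀ i, 0 ≤ v i * ((∑ j, w j * f j (g i)) - τ (g i)) := by
      intro i
      rcases lt_trichotomy (v i) 0 with hv' | hv' | hv'
      · have : ¬ (τ (g i) < ∑ j, w j * f j (g i)) := by
          rw [← hw (g i) (hgs i), hmemC]; linarith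
        nlinarith [not_lt.mp this]
      · simp [hv']
      · have : τ (g i) < ∑ j, w j * f j (g i) := by
          rw [← hw (g i) (hgs i), hmemC]; exact hv'
        nlinarith
    obtain ⟨ip, hip⟩ := hpos
    have htermp : 0 < v ip * ((∑ j, w j * f j (g ip)) - τ (g ip)) := by
      have : τ (g ip) < ∑ j, w j * f j (g ip) := by
        rw [← hw (g ip) (hgs ip), hmemC]; exact hip
      nlinarith
    have hsum1 : 0 < ∑ i, v i * ((∑ j, w j * f j (g i)) - τ (g i)) :=
      Finset.sum_pos' (fun i _ => hterm i) ⟨ip, Finset.mem_univ ip, htermp⟩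
    have hexp1 : ∑ i, v i * ((∑ j, w j * f j (g i)) - τ (g i))
        = - ∑ i, v i * τ (g i) := by
      have := key w
      simp_rw [mul_sub]
      rw [Finset.sum_sub_distrib, this]
      ring
    -- complement pattern
    obtain ⟨w', hw'⟩ := h (s \ C) (Finset.sdiff_subset)
    have hmemC' : ∀ i, g i ∈ s \ C ↔ ¬ (0 < v i) := by
      intro i
      rw [Finset.mem_sdiff, hmemC]
      simp [hgs i]
    have hterm' : ∀ i, v i * ((∑ j, w' j * f j (g i)) - τ (g i)) ≤ 0 := by
      intro i
      rcases lt_trichotomy (v i) 0 with hv' | hv' | hv'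
      · have : τ (g i) < ∑ j, w' j * f j (g i) := by
          rw [← hw' (g i) (hgs i), hmemC']; linarith
        nlinarith
      · simp [hv']
      · have : ¬ (τ (g i) < ∑ j, w' j * f j (g i)) := by
          rw [← hw' (g i) (hgs i), hmemC']; simp [hv']
        nlinarith [not_lt.mp this]
    have hsum2 : ∑ i, v i * ((∑ j, w' j * f j (g i)) - τ (g i)) ≤ 0 :=
      Finset.sum_nonpos (fun i _ => hterm' i)
    have hexp2 : ∑ i, v i * ((∑ j, w' j * f j (g i)) - τ (g i))
        = - ∑ i, v i * τ (g i) := by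
      have := key w'
      simp_rw [mul_sub]
      rw [Finset.sum_sub_distrib, this]
      ring
    rw [hexp1] at hsum1
    rw [hexp2] at hsum2
    linarith
  have hLu' : ∀ j, ∑ i, u i * f j (g i) = 0 := by
    intro j
    have := congrFun hLu j
    simpa [L, Matrix.mulVecLin_apply, Matrix.mulVec, dotProduct, mul_comm] using this
  rcases lt_or_gt_of_ne hi₀ with hneg | hpos
  · refine main (-u) (fun j => ?_) ⟨i₀, by simpa using hneg⟩
    have : ∑ i, (-u) i * f j (g i) = -(∑ i, u i * f j (g i)) := by
      simp [neg_mul, Finset.sum_neg_distrib]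
    rw [this, hLu' j, neg_zero]
  · exact main u hLu' ⟨i₀, hpos⟩


lemma Iic_eq_range_succ (n : ℕ) : Finset.Iic n = Finset.range (n+1) := by
  ext x; simp [Nat.lt_succ_iff]

lemma sum_pow_le_pow_aux (m : ℕ) : ∀ k : ℕ, ∑ i ∈ Finset.range (k+1), m^i ≤ (m+1)^k := by
  intro k
  induction k with
  | zero => simp
  | succ k ih =>
    rw [Finset.sum_range_succ]
    have : (m+1)^(k+1) = (m+1)^k + m*(m+1)^k := by ring
    rw [this]
    exact Nat.add_le_add ih (by
      calc m^(k+1) = m * m^k := by ring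
      _ ≤ m * (m+1)^k := Nat.mul_le_mul_left m (Nat.pow_le_pow_left (Nat.le_succ m) k))

/-- sum of binomials bound -/
lemma sum_choose_le_pow_aux (m k : ℕ) : ∑ i ∈ Finset.Iic k, m.choose i ≤ (m+1)^k := by
  have h1 : ∑ i ∈ Finset.Iic k, m.choose i ≤ ∑ i ∈ Finset.Iic k, m^i :=
    Finset.sum_le_sum fun i _ => Nat.choose_le_pow m i
  refine h1.trans ?_
  rw [Iic_eq_range_succ]
  exact sum_pow_le_pow_aux m k
lemma counting_bound {X : Type*} (N k : ℕ) (K : Fin N → X → X → ℝ) (t : X × X → ℝ)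
    (S : Finset (X × X))
    (h : ∀ b : X × X → Bool, ∃ w : Fin N → ℝ,
      (Finset.univ.filter fun i => w i ≠ 0).card ≤ k ∧
      ∀ p ∈ S, (b p = true ↔ t p < ∑ i, w i * K i p.1 p.2)) :
    2^S.card ≤ ((N+1)*(S.card+1))^k := by
  classical
  set n := S.card with hn
  let α := {p : X × X // p ∈ S}
  have hcardα : Fintype.card α = n := Fintype.card_coe S
  let pat : (Fin N → ℝ) → Finset α :=
    fun w => Finset.univ.filter (fun p : α => t p.1 < ∑ i, w i * K i p.1.1 p.1.2)
  let 𝒜 : Finset (Fin N) → Finset (Finset α) := fun T =>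
    Finset.univ.powerset.filter (fun A => ∃ w : Fin N → ℝ, (∀ i, w i ≠ 0 → i ∈ T) ∧ A = pat w)
  let 𝕋 : Finset (Finset (Fin N)) := Finset.univ.powerset.filter (fun T => T.card ≤ k)
  -- Step 1 : every subset of α is a pattern
  have step1 : (Finset.univ : Finset α).powerset ⊆ 𝕋.biUnion 𝒜 := by
    intro A hA
    obtain ⟨w, hwcard, hwpat⟩ := h (fun p => if hp : p ∈ S then decide ((⟨p, hp⟩ : α) ∈ A) else false)
    have hApat : A = pat w := by
      ext p
      have := hwpat p.1 p.2
      simp only [p.2, dite_true, decide_eq_true_eq, Subtype.coe_eta] at this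
      simp only [pat, Finset.mem_filter, Finset.mem_univ, true_and]
      rw [← this]
    refine Finset.mem_biUnion.mpr ⟨Finset.univ.filter (fun i => w i ≠ 0), ?_, ?_⟩
    · simp only [𝕋, Finset.mem_filter, Finset.mem_powerset]
      exact ⟨Finset.subset_univ _, hwcard⟩
    · simp only [𝒜, Finset.mem_filter, Finset.mem_powerset]
      exact ⟨Finset.subset_univ _, w, fun i hi => by simp [hi], hApat⟩
  -- Step 2 : each pattern class has few elements, via Sauer-Shelah
  have step2 : ∀ T ∈ 𝕋, (𝒜 T).card ≤ (n+1)^k := by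
    intro T hT
    have hTk : T.card ≤ k := (Finset.mem_filter.mp hT).2
    -- VC dimension bound
    have hvc : (𝒜 T).vcDim ≤ T.card := by
      refine Finset.sup_le ?_
      intro s hs
      rw [Finset.mem_shatterer] at hs
      by_contra hbig
      push_neg at hbig
      obtain ⟨s', hs'sub, hs'card⟩ := Finset.exists_subset_card_eq (s := s) (n := T.card + 1) hbig
      have hshat' : (𝒜 T).Shatters s' := hs.mono_right hs'sub
      -- reindex T
      let σ : Fin T.card → Fin N := fun j => (T.equivFin.symm j : Fin N)
      refine no_shatter_linalg T.card (fun j p => K (σ j) p.1.1 p.1.2) (fun p : α => t p.1)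
        s' hs'card ?_
      intro C hC
      obtain ⟨u, hu, hsu⟩ := hshat' hC
      simp only [𝒜, Finset.mem_filter, Finset.mem_powerset] at hu
      obtain ⟨-, w, hwsupp, rfl⟩ := hu
      refine ⟨fun j => w (σ j), fun p hp => ?_⟩
      have hsum : ∑ j, w (σ j) * K (σ j) p.1.1 p.1.2 = ∑ i, w i * K i p.1.1 p.1.2 := by
        have e1 : ∑ j, w (σ j) * K (σ j) p.1.1 p.1.2
            = ∑ i ∈ T.attach, w i * K i p.1.1 p.1.2 := by
          rw [← Fintype.sum_equiv T.equivFin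
            (fun i : {x // x ∈ T} => w i * K i p.1.1 p.1.2)
            (fun j => w (σ j) * K (σ j) p.1.1 p.1.2) (fun i => by simp [σ])]
          rfl
        rw [e1, Finset.sum_attach T (fun i => w i * K i p.1.1 p.1.2)]
        refine Finset.sum_subset (Finset.subset_univ T) ?_
        intro i _ hiT
        have : w i = 0 := by
          by_contra h0
          exact hiT (hwsupp i h0)
        simp [this]
      rw [hsum]
      have : p ∈ C ↔ p ∈ s' ∩ pat w := by rw [hsu]
      rw [this, Finset.mem_inter]
      simp only [pat, Finset.mem_filter, Finset.mem_univ, true_and, hp, true_and]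
    -- Sauer-Shelah
    calc (𝒜 T).card ≤ (𝒜 T).shatterer.card := Finset.card_le_card_shatterer _
      _ ≤ ∑ i ∈ Finset.Iic (𝒜 T).vcDim, (Fintype.card α).choose i :=
          Finset.card_shatterer_le_sum_vcDim
      _ ≤ ∑ i ∈ Finset.Iic k, (Fintype.card α).choose i := by
          refine Finset.sum_le_sum_of_subset ?_
          exact Finset.Iic_subset_Iic.mpr (hvc.trans hTk)
      _ ≤ (n+1)^k := by rw [hcardα]; exact sum_choose_le_pow_aux n k
  -- Step 3 : few support sets
  have step3 : 𝕋.card ≤ (N+1)^k := by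
    have : 𝕋 ⊆ (Finset.Iic k).biUnion (fun i => Finset.powersetCard i (Finset.univ : Finset (Fin N))) := by
      intro T hT
      refine Finset.mem_biUnion.mpr ⟨T.card, Finset.mem_Iic.mpr (Finset.mem_filter.mp hT).2, ?_⟩
      exact Finset.mem_powersetCard.mpr ⟨Finset.subset_univ T, rfl⟩
    calc 𝕋.card ≤ _ := Finset.card_le_card this
      _ ≤ ∑ i ∈ Finset.Iic k, (Finset.powersetCard i (Finset.univ : Finset (Fin N))).card :=
          Finset.card_biUnion_le
      _ ≤ (N+1)^k := by
          simp only [Finset.card_powersetCard, Finset.card_univ, Fintype.card_fin]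
          exact sum_choose_le_pow_aux N k
  -- Combine
  calc 2^n = (Finset.univ : Finset α).powerset.card := by
        rw [Finset.card_powerset, Finset.card_univ, hcardα]
    _ ≤ (𝕋.biUnion 𝒜).card := Finset.card_le_card step1
    _ ≤ ∑ T ∈ 𝕋, (𝒜 T).card := Finset.card_biUnion_le
    _ ≤ ∑ _T ∈ 𝕋, (n+1)^k := Finset.sum_le_sum step2
    _ = 𝕋.card * (n+1)^k := by rw [Finset.sum_const, smul_eq_mul]
    _ ≤ (N+1)^k * (n+1)^k := Nat.mul_le_mul_right _ step3
    _ = ((N+1)*(n+1))^k := (mul_pow _ _ _).symm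


lemma analytic_bound (n N k : ℕ) (hk : 1 ≤ k) (hN : 1 ≤ N)
    (h : 2^n ≤ ((N+1)*(n+1))^k) :
    (n:ℝ) ≤ 2*k*Real.logb 2 k + 2*k*Real.logb 2 (4*Real.exp 1*N) := by
  set l2 := Real.log 2 with hl2def
  have hl2a : 0.693 < l2 := by
    have := Real.log_two_gt_d9; linarith
  have hl2b : l2 ≤ 1 := by
    have := Real.log_le_sub_one_of_pos (by norm_num : (0:ℝ) < 2); linarith
  have hl2pos : 0 < l2 := by linarith
  have hkr : (1:ℝ) ≤ (k:ℝ) := by exact_mod_cast hk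
  have hNr : (1:ℝ) ≤ (N:ℝ) := by exact_mod_cast hN
  have hkpos : (0:ℝ) < (k:ℝ) := by linarith
  set lk := Real.log k with hlkdef
  set lN := Real.log N with hlNdef
  set ll := Real.log l2 with hlldef
  have hlk0 : 0 ≤ lk := Real.log_nonneg hkr
  have hlN0 : 0 ≤ lN := Real.log_nonneg hNr
  -- Step A : main inequality from counting
  have hA : (n:ℝ) * l2 ≤ k * (Real.log (N+1) + Real.log (n+1)) := by
    have hcast : (2:ℝ)^n ≤ (((N:ℝ)+1)*((n:ℝ)+1))^k := by exact_mod_cast h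
    have hlog := Real.log_le_log (by positivity) hcast
    rw [Real.log_pow, Real.log_pow, Real.log_mul (by positivity) (by positivity)] at hlog
    calc (n:ℝ) * l2 = n * Real.log 2 := rfl
      _ ≤ k * (Real.log (N+1) + Real.log (n+1)) := by exact_mod_cast hlog
  -- Step C : log (N+1) ≤ l2 + lN
  have hC : Real.log ((N:ℝ)+1) ≤ l2 + lN := by
    have h1 : ((N:ℝ)+1) ≤ 2*N := by linarith
    have h2 := Real.log_le_log (by positivity) h1
    rwa [Real.log_mul (by norm_num) (by positivity)] at h2
  -- Step D : tangent bound on log (n+1)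
  have hD : Real.log ((n:ℝ)+1) ≤ ((n:ℝ)+1)*l2/(2*k) + (l2 + lk - ll) - 1 := by
    have hcpos : (0:ℝ) < 2*k/l2 := by positivity
    have h1 := Real.log_le_sub_one_of_pos (show (0:ℝ) < ((n:ℝ)+1)/(2*k/l2) by positivity)
    rw [Real.log_div (by positivity) (by positivity),
        Real.log_div (by positivity) (by positivity),
        Real.log_mul (by norm_num) (by positivity)] at h1
    have hexp : ((n:ℝ)+1)/(2*k/l2) = ((n:ℝ)+1)*l2/(2*k) := by
      field_simp
    rw [hexp] at h1
    have : Real.log 2 = l2 := rfl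
    rw [this] at h1
    linarith
  -- Step E : lower bound for ll
  have hE : ll * l2 ≥ l2 - 1 := by
    have h1 := Real.log_le_sub_one_of_pos (show (0:ℝ) < 1/l2 by positivity)
    rw [Real.log_div (by norm_num) (by positivity), Real.log_one] at h1
    have h2 : -ll ≤ 1/l2 - 1 := by linarith
    have h3 : (-ll) * l2 ≤ (1/l2 - 1) * l2 := mul_le_mul_of_nonneg_right h2 hl2pos.le
    have h4 : (1/l2 - 1) * l2 = 1 - l2 := by field_simp
    linarith [h3, h4]
  have hllub : ll ≤ 0 := Real.log_nonpos (by linarith) hl2b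
  have hlllb : ll ≥ -0.45 := by
    nlinarith [mul_nonneg (by linarith : (0:ℝ) ≤ l2 - 0.693) (by linarith : (0:ℝ) ≤ -ll)]
  -- combine
  have hmain : (n:ℝ) * l2 ≤ 2*k*lk + 2*k*(2*l2 + 1 + lN) := by
    have hDk : (k:ℝ) * Real.log ((n:ℝ)+1) ≤ ((n:ℝ)+1)*l2/2 + k*(l2 + lk - ll - 1) := by
      have := mul_le_mul_of_nonneg_left hD hkpos.le
      have hsimp : (k:ℝ) * (((n:ℝ)+1)*l2/(2*k)) = ((n:ℝ)+1)*l2/2 := by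
        field_simp
      linarith
    have hCk : (k:ℝ) * Real.log ((N:ℝ)+1) ≤ k*(l2 + lN) :=
      mul_le_mul_of_nonneg_left hC hkpos.le
    have hE1 : (n:ℝ)*l2 ≤ k*(l2+lN) + ((n:ℝ)+1)*l2/2 + k*(l2 + lk - ll - 1) := by linarith
    have hkll : (k:ℝ)*(ll + 0.45) ≥ 0 := mul_nonneg hkpos.le (by linarith)
    linarith
  -- translate to logb
  have hlogb1 : Real.logb 2 k = lk / l2 := by rw [Real.logb]
  have hlogb2 : Real.logb 2 (4*Real.exp 1*N) = (2*l2 + 1 + lN) / l2 := by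
    rw [Real.logb]
    congr 1
    rw [Real.log_mul (by positivity) (by positivity),
        Real.log_mul (by norm_num) (by positivity), Real.log_exp]
    have : Real.log 4 = 2 * l2 := by
      rw [show (4:ℝ) = 2^2 by norm_num, Real.log_pow]; push_cast; ring
    rw [this]
  rw [hlogb1, hlogb2]
  rw [show 2*(k:ℝ)*(lk/l2) + 2*k*((2*l2+1+lN)/l2) = (2*k*lk + 2*k*(2*l2+1+lN))/l2 by field_simp]
  rw [le_div_iff₀ hl2pos]
  exact hmain

/-- A class `𝒦` of real-valued functions on pairs pseudo-shatters a finite set of pairs `S`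
if there are thresholds `t` such that every sign pattern on `S` is realized by some `K ∈ 𝒦`. -/
def PseudoShatters {X : Type*} (𝒦 : Set (X → X → ℝ)) (S : Finset (X × X)) : Prop :=
  ∃ t : X × X → ℝ, ∀ b : X × X → Bool, ∃ K ∈ 𝒦,
    ∀ p ∈ S, (b p = true ↔ t p < K p.1 p.2)

/-- The family of `k`-sparse affine combinations of `N` kernels has pseudodimension at most
`2 k log₂ k + 2 k log₂ (4 e N)`. -/
theorem pseudodim_sparse_combinations {X : Type*} (N k : ℕ)
    (K : Fin N → X → X → ℝ)
    (𝒦 : Set (X → X → ℝ))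
    (h𝒦 : 𝒦 = {F | ∃ w : Fin N → ℝ, (∑ i, w i = 1) ∧
        (Finset.univ.filter fun i => w i ≠ 0).card ≤ k ∧
        F = fun x x' => ∑ i, w i * K i x x'}) :
    ∀ S : Finset (X × X), PseudoShatters 𝒦 S →
      (S.card : ℝ) ≤ 2 * k * Real.logb 2 k + 2 * k * Real.logb 2 (4 * Real.exp 1 * N) := by
  intro S hS
  obtain ⟨t, ht⟩ := hS
  -- extract a witness to rule out degenerate cases
  obtain ⟨F₀, hF₀, -⟩ := ht (fun _ => true)
  rw [h𝒦] at hF₀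
  obtain ⟨w₀, hw₀sum, hw₀card, -⟩ := hF₀
  have hk : 1 ≤ k := by
    by_contra hk0
    push_neg at hk0
    interval_cases k
    have hzero : ∀ i, w₀ i = 0 := by
      intro i
      by_contra h0
      have h1 : 0 < (Finset.univ.filter fun i => w₀ i ≠ 0).card :=
        Finset.card_pos.mpr ⟨i, Finset.mem_filter.mpr ⟨Finset.mem_univ i, h0⟩⟩
      omega
    rw [Finset.sum_eq_zero (fun i _ => hzero i)] at hw₀sum
    norm_num at hw₀sum
  have hN : 1 ≤ N := by
    by_contra hN0
    push_neg at hN0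
    interval_cases N
    simp at hw₀sum
  -- counting
  have hcount : 2^S.card ≤ ((N+1)*(S.card+1))^k := by
    refine counting_bound N k K t S ?_
    intro b
    obtain ⟨F, hF, hFb⟩ := ht b
    rw [h𝒦] at hF
    obtain ⟨w, -, hwcard, rfl⟩ := hF
    exact ⟨w, hwcard, hFb⟩
  exact analytic_bound S.card N k hk hN hcount
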